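/- For n, m natural numbers with m ≤ ⌊n/2⌋ - 1 and r = ((2m+2)/(2n-2m-1))² (so 0 ≤ r < 1), the weighted partial sum satisfies Σ_{s=1}^{m} s · C(2n, 2m+4-2s) < C(2n, 2m+2) · 1/(1-r)². -/

import Mathlib

private lemma weighted_aux_num (mr cr d : ℝ) (hc0 : 0 ≤ cr) (hcm : cr ≤ mr) (hd : 1 ≤ d) :
    (2*mr - 2*cr + 2) * (2*mr - 2*cr + 1) * d^2 ≤ (2*mr+2)^2 * ((d+1+2*cr) * (d+2*cr)) := by
  have hd0 : (0:ℝ) ≤ d := by linarith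
  have hm0 : (0:ℝ) ≤ mr := le_trans hc0 hcm
  have h1 : (2*mr-2*cr+2)*(2*mr-2*cr+1) ≤ (2*mr+2)*(2*mr+1) := by nlinarith
  have h2a : (2*mr+1)*d ≤ (2*mr+2)*(d+1+2*cr) := by nlinarith
  have h2 : ((2*mr+1)*d)*d ≤ ((2*mr+2)*(d+1+2*cr))*(d+2*cr) :=
    mul_le_mul h2a (by linarith) hd0 (by nlinarith)
  calc (2*mr-2*cr+2)*(2*mr-2*cr+1)*d^2 ≤ (2*mr+2)*(2*mr+1)*d^2 :=
        mul_le_mul_of_nonneg_right h1 (sq_nonneg d)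
    _ = (2*mr+2)*(((2*mr+1)*d)*d) := by ring
    _ ≤ (2*mr+2)*(((2*mr+2)*(d+1+2*cr))*(d+2*cr)) :=
        mul_le_mul_of_nonneg_left h2 (by linarith)
    _ = (2*mr+2)^2*((d+1+2*cr)*(d+2*cr)) := by ring

/-- For `m ≤ ⌊n/2⌋ - 1` and `r = ((2m+2)/(2n-2m-1))²` (so that `0 ≤ r < 1`), the weighted
partial sum satisfies `Σ_{s=1}^{m} s·C(2n, 2m+4-2s) < C(2n, 2m+2) · 1/(1-r)²`. -/
theorem weighted_partial_binomial_sum_bound (n m : ℕ) (r : ℝ)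
    (hm : m ≤ n / 2 - 1)
    (hr : r = ((2 * (m : ℝ) + 2) / (2 * (n : ℝ) - 2 * (m : ℝ) - 1)) ^ 2)
    (hr0 : 0 ≤ r) (hr1 : r < 1) :
    (∑ s ∈ Finset.Icc 1 m, (s : ℝ) * ((2 * n).choose (2 * m + 4 - 2 * s) : ℝ)) <
      ((2 * n).choose (2 * m + 2) : ℝ) * (1 / (1 - r) ^ 2) := by
  -- Step 1: `m + 1 ≤ n`.
  have hnm : m + 1 ≤ n := by
    by_contra h
    push_neg at h
    have hn : (n : ℝ) ≤ m := by exact_mod_cast Nat.lt_succ_iff.mp h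
    have hn0 : (0:ℝ) ≤ n := Nat.cast_nonneg n
    have hden : (2*(n:ℝ) - 2*m - 1) ≤ -1 := by linarith
    have h2 : ((2 * (m : ℝ) + 2) / (2 * (n : ℝ) - 2 * (m : ℝ) - 1)) ^ 2 < 1 := hr ▸ hr1
    rw [div_pow, div_lt_one (by nlinarith)] at h2
    nlinarith
  have hmn : (m:ℝ) + 1 ≤ n := by exact_mod_cast hnm
  have hden1 : (1:ℝ) ≤ 2*(n:ℝ) - 2*(m:ℝ) - 1 := by linarith
  have hrpos : 0 < r := by
    rw [hr]
    exact pow_pos (div_pos (by positivity) (by linarith)) 2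
  have hCpos : 0 < ((2*n).choose (2*m+2) : ℝ) := by
    exact_mod_cast Nat.choose_pos (by omega)
  -- Step 2: key geometric domination of binomial coefficients.
  have key : ∀ k, k ≤ m → ((2*n).choose (2*m+2-2*k) : ℝ) ≤ r^k * ((2*n).choose (2*m+2)) := by
    intro k hk
    induction k with
    | zero => simp
    | succ k ih =>
      have hk' : k ≤ m := Nat.le_of_succ_le hk
      have ihk := ih hk'
      set N := 2*n with hN
      have hj : 2*m+2-2*(k+1) = 2*m-2*k := by omega
      have hj2 : 2*m+2-2*k = (2*m-2*k) + 2 := by omega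
      set j := 2*m-2*k with hjdef
      have hjcast : (j:ℝ) = 2*(m:ℝ) - 2*(k:ℝ) := by
        rw [hjdef, Nat.cast_sub (by omega : 2*k ≤ 2*m)]
        push_cast; ring
      have hjN : j + 2 ≤ N := by omega
      have hNcast : ((N:ℕ):ℝ) = 2*(n:ℝ) := by push_cast [hN]; ring
      -- two choose identities, cast to ℝ
      have e1 : (N.choose (j+1) : ℝ) * ((j:ℝ)+1) = (N.choose j) * ((N:ℝ) - j) := by
        have h := Nat.choose_succ_right_eq N j
        have h' : ((N.choose (j+1) * (j+1) : ℕ) : ℝ) = ((N.choose j * (N - j) : ℕ) : ℝ) := by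
          exact_mod_cast h
        push_cast [Nat.cast_sub (show j ≤ N by omega)] at h'
        linarith
      have e2 : (N.choose (j+2) : ℝ) * ((j:ℝ)+2) = (N.choose (j+1)) * ((N:ℝ) - j - 1) := by
        have h := Nat.choose_succ_right_eq N (j+1)
        have h' : ((N.choose (j+2) * (j+2) : ℕ) : ℝ) = ((N.choose (j+1) * (N - (j+1)) : ℕ) : ℝ) := by
          exact_mod_cast h
        push_cast [Nat.cast_sub (show j + 1 ≤ N by omega)] at h'
        linarith
      -- the one-step ratio bound
      have step : (N.choose j : ℝ) ≤ r * (N.choose (j+2)) := by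
        have hNj1 : (1:ℝ) ≤ (N:ℝ) - j - 1 := by
          have : ((j:ℝ) + 2) ≤ (N:ℝ) := by exact_mod_cast hjN
          linarith
        have hNj0 : (0:ℝ) < ((N:ℝ) - j) * ((N:ℝ) - j - 1) := by nlinarith
        rw [← mul_le_mul_iff_of_pos_right hNj0]
        have lhs_eq : (N.choose j : ℝ) * (((N:ℝ) - j) * ((N:ℝ) - j - 1)) =
            (N.choose (j+2) : ℝ) * (((j:ℝ)+2) * ((j:ℝ)+1)) := by
          linear_combination (-((N:ℝ) - j - 1)) * e1 - ((j:ℝ)+1) * e2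
        rw [lhs_eq]
        -- reduce to the numeric inequality
        have hC2 : (0:ℝ) ≤ (N.choose (j+2) : ℝ) := Nat.cast_nonneg _
        have hnum : ((j:ℝ)+2) * ((j:ℝ)+1) ≤ r * (((N:ℝ) - j) * ((N:ℝ) - j - 1)) := by
          have hc0 : (0:ℝ) ≤ (k:ℝ) := Nat.cast_nonneg k
          have hcm : (k:ℝ) ≤ (m:ℝ) := by exact_mod_cast hk'
          have hNj : (N:ℝ) - j = (2*(n:ℝ) - 2*(m:ℝ) - 1) + 1 + 2*(k:ℝ) := by
            rw [hNcast, hjcast]; ring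
          have hNj' : (N:ℝ) - j - 1 = (2*(n:ℝ) - 2*(m:ℝ) - 1) + 2*(k:ℝ) := by
            rw [hNcast, hjcast]; ring
          have hrval : r = (2*(m:ℝ)+2)^2 / (2*(n:ℝ) - 2*(m:ℝ) - 1)^2 := by rw [hr, div_pow]
          rw [hNj', hNj, hrval, hjcast, div_mul_eq_mul_div,
            le_div_iff₀ (by positivity)]
          have haux := weighted_aux_num (m:ℝ) (k:ℝ) (2*(n:ℝ) - 2*(m:ℝ) - 1) hc0 hcm hden1
          linarith only [haux]
        calc (N.choose (j+2) : ℝ) * (((j:ℝ)+2) * ((j:ℝ)+1))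
            ≤ (N.choose (j+2) : ℝ) * (r * (((N:ℝ) - j) * ((N:ℝ) - j - 1))) :=
              mul_le_mul_of_nonneg_left hnum hC2
          _ = r * (N.choose (j+2) : ℝ) * (((N:ℝ) - j) * ((N:ℝ) - j - 1)) := by ring
      rw [hj]
      calc (N.choose j : ℝ) ≤ r * (N.choose (j+2)) := step
        _ = r * (N.choose (2*m+2-2*k)) := by rw [hj2]
        _ ≤ r * (r^k * (N.choose (2*m+2))) :=
            mul_le_mul_of_nonneg_left ihk (le_of_lt hrpos)
        _ = r^(k+1) * (N.choose (2*m+2)) := by ring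
  -- Step 3: bound the sum termwise by the geometric-type series.
  have hsum : (∑ s ∈ Finset.Icc 1 m, (s:ℝ) * ((2*n).choose (2*m+4-2*s) : ℝ)) ≤
      (∑ k ∈ Finset.range m, ((k:ℝ)+1) * r^k) * ((2*n).choose (2*m+2) : ℝ) := by
    rw [Finset.sum_mul, show Finset.Icc 1 m = Finset.Ico 1 (m+1) by rfl,
      Finset.sum_Ico_eq_sum_range]
    simp only [Nat.add_sub_cancel]
    apply Finset.sum_le_sum
    intro k hk
    have hkm : k < m := Finset.mem_range.mp hk
    have hidx : 2*m+4-2*(1+k) = 2*m+2-2*k := by omega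
    rw [hidx]
    have hkey := key k (le_of_lt hkm)
    have hk0 : (0:ℝ) ≤ (1:ℝ) + k := by positivity
    calc ((1+k : ℕ):ℝ) * ((2*n).choose (2*m+2-2*k) : ℝ)
        ≤ ((1+k : ℕ):ℝ) * (r^k * ((2*n).choose (2*m+2))) :=
          mul_le_mul_of_nonneg_left hkey (by positivity)
      _ = ((k:ℝ)+1) * r^k * ((2*n).choose (2*m+2)) := by push_cast; ring
  -- Step 4: the partial sum of `(k+1) r^k` is strictly below `1/(1-r)^2`.
  have hgeomsum : HasSum (fun k : ℕ => ((k:ℝ)+1) * r^k) (1 / (1-r)^2) := by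
    have h := hasSum_choose_mul_geometric_of_norm_lt_one (𝕜 := ℝ) 1
      (r := r) (by rwa [Real.norm_eq_abs, abs_of_nonneg hr0])
    convert h using 2 with k
    · rfl
    · rw [Nat.choose_one_right]; push_cast; ring
  have hpartial : (∑ k ∈ Finset.range m, ((k:ℝ)+1) * r^k) < 1 / (1-r)^2 := by
    have hle : (∑ k ∈ Finset.range (m+1), ((k:ℝ)+1) * r^k) ≤ 1 / (1-r)^2 := by
      apply sum_le_hasSum _ _ hgeomsum
      intro k _
      positivity
    have hlt : (∑ k ∈ Finset.range m, ((k:ℝ)+1) * r^k) <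
        (∑ k ∈ Finset.range (m+1), ((k:ℝ)+1) * r^k) := by
      rw [Finset.sum_range_succ]
      have : (0:ℝ) < ((m:ℝ)+1) * r^m := by positivity
      linarith
    linarith
  calc (∑ s ∈ Finset.Icc 1 m, (s:ℝ) * ((2*n).choose (2*m+4-2*s) : ℝ))
      ≤ (∑ k ∈ Finset.range m, ((k:ℝ)+1) * r^k) * ((2*n).choose (2*m+2) : ℝ) := hsum
    _ < (1 / (1-r)^2) * ((2*n).choose (2*m+2) : ℝ) :=
        mul_lt_mul_of_pos_right hpartial hCpos
    _ = ((2*n).choose (2*m+2) : ℝ) * (1 / (1-r)^2) := by ring
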